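/- For every positive integer p and every real x with 0 < x < 1, Li_p(−x) + (−1)^p · Li_p(−1/x) = 2·(−1)·∑_{k=0}^{⌊p/2⌋} (ln(x)^(p−2k)/(p−2k)!) · Φ(−1, 2k, 1), where Φ(−1, 2k, 1) = ∑_{n≥0} (−1)^n/(n+1)^{2k} (interpreted as η(2k), with η(0) = 1/2). -/

import Mathlib

open MeasureTheory Real Set

/-- Li_p(w) for real w ≤ 0 via the integral representation
Li_p(w) = ((-1)^(p-1)/(p-1)!) ∫_0^1 w log(y)^(p-1)/(1 - w y) dy. -/
noncomputable def liInt (p : ℕ) (w : ℝ) : ℝ :=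
  ((-1 : ℝ) ^ (p - 1) / (Nat.factorial (p - 1))) *
    ∫ y in (0:ℝ)..1, w * Real.log y ^ (p - 1) / (1 - w * y)

/-- Dirichlet eta with the convention η(0) = 1/2. -/
noncomputable def etaC (s : ℕ) : ℝ :=
  if s = 0 then 1 / 2 else ∑' n : ℕ, (-1 : ℝ) ^ n / ((n : ℝ) + 1) ^ s


-- x^m/m! ≤ exp x
lemma pow_div_fact_le_exp {x : ℝ} (hx : 0 ≤ x) (m : ℕ) : x ^ m / m.factorial ≤ Real.exp x := by
  calc x ^ m / m.factorial ≤ ∑ i ∈ Finset.range (m+1), x ^ i / i.factorial := by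
        refine Finset.single_le_sum (f := fun i => x ^ i / (i.factorial : ℝ)) ?_ (Finset.self_mem_range_succ m)
        intro i _
        positivity
    _ ≤ Real.exp x := Real.sum_le_exp_of_nonneg hx _

lemma one_add_abs_log_pow_le (m : ℕ) {u : ℝ} (hu0 : 0 < u) (hu1 : u ≤ 1) :
    (1 + |Real.log u|) ^ m ≤ 2 ^ m * m.factorial * Real.exp (1/2) * u ^ (-(1/2) : ℝ) := by
  have hlu : Real.log u ≤ 0 := Real.log_nonpos hu0.le hu1
  have habs : |Real.log u| = -Real.log u := abs_of_nonpos hlu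
  set t : ℝ := -Real.log u with ht
  have ht0 : 0 ≤ t := by simp [ht]; linarith
  have hexp : u ^ (-(1/2) : ℝ) = Real.exp (t / 2) := by
    rw [Real.rpow_def_of_pos hu0]
    congr 1
    simp only [ht]
    ring
  have h1 : ((1+t)/2) ^ m / m.factorial ≤ Real.exp ((1+t)/2) := pow_div_fact_le_exp (by linarith) m
  have hfac : (0:ℝ) < m.factorial := by positivity
  have h2m : (0:ℝ) < 2 ^ m := by positivity
  have h2 : (1+t) ^ m ≤ 2 ^ m * m.factorial * Real.exp ((1+t)/2) := by
    rw [div_pow] at h1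
    calc (1+t) ^ m = ((1+t) ^ m / 2 ^ m / m.factorial) * (2 ^ m * m.factorial) := by field_simp
      _ ≤ Real.exp ((1+t)/2) * (2 ^ m * m.factorial) := by
          apply mul_le_mul_of_nonneg_right h1 (by positivity)
      _ = 2 ^ m * m.factorial * Real.exp ((1+t)/2) := by ring
  rw [habs, hexp]
  calc (1 + t) ^ m ≤ 2 ^ m * m.factorial * Real.exp ((1+t)/2) := h2
    _ = 2 ^ m * m.factorial * Real.exp (1/2) * Real.exp (t/2) := by
        rw [show (1+t)/2 = 1/2 + t/2 by ring, Real.exp_add]; ring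

/-- Master integrability lemma: anything continuous on (0,1) and dominated by
`C * (1 + |log u|) ^ m` is interval integrable on [0,1]. -/
lemma intervalIntegrable_of_log_bound (f : ℝ → ℝ) (m : ℕ) (C : ℝ)
    (hf : ContinuousOn f (Set.Ioo 0 1))
    (hb : ∀ u ∈ Set.Ioo (0:ℝ) 1, |f u| ≤ C * (1 + |Real.log u|) ^ m) :
    IntervalIntegrable f volume 0 1 := by
  have hC : 0 ≤ C := by
    have h := hb (1/2) (by norm_num)
    by_contra hC
    push_neg at hC
    have hpos : 0 < (1 + |Real.log (1/2:ℝ)|) ^ m := by positivity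
    nlinarith [abs_nonneg (f (1/2 : ℝ))]
  rw [intervalIntegrable_iff_integrableOn_Ioo_of_le (by norm_num : (0:ℝ) ≤ 1)]
  have hg : IntegrableOn (fun u : ℝ => (C * (2 ^ m * m.factorial * Real.exp (1/2))) * u ^ (-(1/2) : ℝ))
      (Set.Ioo 0 1) volume := by
    have : IntervalIntegrable (fun u : ℝ => u ^ (-(1/2) : ℝ)) volume 0 1 :=
      intervalIntegral.intervalIntegrable_rpow' (by norm_num)
    rw [intervalIntegrable_iff_integrableOn_Ioo_of_le (by norm_num : (0:ℝ) ≤ 1)] at this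
    exact this.const_mul _
  refine Integrable.mono hg (hf.aestronglyMeasurable measurableSet_Ioo) ?_
  filter_upwards [ae_restrict_mem measurableSet_Ioo] with u hu
  rcases hu with ⟨hu0, hu1⟩
  have h1 := one_add_abs_log_pow_le m hu0 hu1.le
  have h2 := hb u ⟨hu0, hu1⟩
  have h3 : (0:ℝ) ≤ u ^ (-(1/2):ℝ) := Real.rpow_nonneg hu0.le _
  rw [Real.norm_eq_abs, Real.norm_eq_abs]
  have habs2 : |C * (2 ^ m * m.factorial * Real.exp (1/2)) * u ^ (-(1/2):ℝ)| =
      C * (2 ^ m * m.factorial * Real.exp (1/2)) * u ^ (-(1/2):ℝ) := by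
    apply abs_of_nonneg; positivity
  rw [habs2]
  calc |f u| ≤ C * (1 + |Real.log u|) ^ m := h2
    _ ≤ C * (2 ^ m * m.factorial * Real.exp (1/2) * u ^ (-(1/2):ℝ)) := by
        apply mul_le_mul_of_nonneg_left h1 hC
    _ = C * (2 ^ m * m.factorial * Real.exp (1/2)) * u ^ (-(1/2):ℝ) := by ring

lemma tendsto_pow_mul_log_pow (n j : ℕ) (hn : 1 ≤ n) :
    Filter.Tendsto (fun u : ℝ => u ^ n * Real.log u ^ j) (nhdsWithin 0 (Set.Ioi 0)) (nhds 0) := by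
  rcases Nat.eq_zero_or_pos j with hj | hj
  · subst hj
    simp only [pow_zero, mul_one]
    have : Filter.Tendsto (fun u : ℝ => u ^ n) (nhds 0) (nhds 0) := by
      simpa using (continuous_pow n).tendsto (0:ℝ) |>.congr (fun u => rfl) |>.mono_right (by rw [zero_pow (by omega : n ≠ 0)])
    exact this.mono_left nhdsWithin_le_nhds
  · have hr : (0:ℝ) < (n : ℝ) / j := by positivity
    have h0 := (tendsto_log_mul_rpow_nhdsGT_zero hr).pow j
    rw [zero_pow hj.ne'] at h0
    have heq : ∀ᶠ u in nhdsWithin (0:ℝ) (Set.Ioi 0),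
        (Real.log u * u ^ ((n:ℝ)/j)) ^ j = u ^ n * Real.log u ^ j := by
      filter_upwards [self_mem_nhdsWithin] with u hu
      have hu0 : (0:ℝ) < u := hu
      rw [mul_pow, ← Real.rpow_natCast (u ^ ((n:ℝ)/j)) j, ← Real.rpow_mul hu0.le]
      rw [div_mul_cancel₀ _ (by exact_mod_cast hj.ne' : (j:ℝ) ≠ 0)]
      rw [Real.rpow_natCast]
      ring
    exact (Filter.Tendsto.congr' heq h0)

lemma intervalIntegrable_pow_mul_log_pow (n j : ℕ) :
    IntervalIntegrable (fun u : ℝ => u ^ n * Real.log u ^ j) volume 0 1 := by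
  apply intervalIntegrable_of_log_bound _ j 1
  · exact (continuousOn_pow n).mul
      ((Real.continuousOn_log.mono (by intro u hu; exact ne_of_gt hu.1)).pow j)
  · intro u hu
    rw [abs_mul, abs_pow, abs_pow, one_mul]
    have h1 : |u| ≤ 1 := by rw [abs_of_pos hu.1]; exact hu.2.le
    calc |u| ^ n * |Real.log u| ^ j ≤ 1 ^ n * |Real.log u| ^ j := by
          apply mul_le_mul_of_nonneg_right (pow_le_pow_left₀ (abs_nonneg u) h1 n) (by positivity)
      _ = |Real.log u| ^ j := by ring
      _ ≤ (1 + |Real.log u|) ^ j :=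
          pow_le_pow_left₀ (abs_nonneg _) (by linarith [abs_nonneg (Real.log u)]) j

lemma integral_pow_mul_log_pow (n j : ℕ) :
    ∫ u in (0:ℝ)..1, u ^ n * Real.log u ^ j
      = (-1)^j * j.factorial / ((n:ℝ)+1)^(j+1) := by
  induction j with
  | zero => simp [integral_pow]
  | succ j ih =>
    have key : ∫ u in (0:ℝ)..1,
        (u ^ n * Real.log u ^ (j+1) + (((j:ℝ)+1)/((n:ℝ)+1)) * (u ^ n * Real.log u ^ j)) = 0 := by
      have hder : ∀ u ∈ Set.Ioo (0:ℝ) 1,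
          HasDerivAt (fun u : ℝ => u ^ (n+1) * Real.log u ^ (j+1) / ((n:ℝ)+1))
            (u ^ n * Real.log u ^ (j+1) + (((j:ℝ)+1)/((n:ℝ)+1)) * (u ^ n * Real.log u ^ j)) u := by
        intro u hu
        have hu0 : (0:ℝ) < u := hu.1
        have h1 : HasDerivAt (fun u : ℝ => u ^ (n+1)) (((n:ℝ)+1) * u ^ n) u := by
          simpa using hasDerivAt_pow (n+1) u
        have h2 : HasDerivAt (fun u : ℝ => Real.log u ^ (j+1))
            (((j:ℝ)+1) * Real.log u ^ j * (1/u)) u := by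
          simpa using ((Real.hasDerivAt_log hu0.ne').fun_pow (j+1))
        have := (h1.mul h2).div_const ((n:ℝ)+1)
        refine this.congr_deriv ?_
        have hn1 : ((n:ℝ)+1) ≠ 0 := by positivity
        field_simp
        ring
      have htend0 : Filter.Tendsto (fun u : ℝ => u ^ (n+1) * Real.log u ^ (j+1) / ((n:ℝ)+1))
          (nhdsWithin 0 (Set.Ioi 0)) (nhds 0) := by
        have := (tendsto_pow_mul_log_pow (n+1) (j+1) (by omega)).div_const ((n:ℝ)+1)
        simpa using this
      have htend1 : Filter.Tendsto (fun u : ℝ => u ^ (n+1) * Real.log u ^ (j+1) / ((n:ℝ)+1))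
          (nhdsWithin 1 (Set.Iio 1)) (nhds 0) := by
        have hc : Filter.Tendsto (fun u : ℝ => u ^ (n+1) * Real.log u ^ (j+1) / ((n:ℝ)+1))
            (nhds 1) (nhds ((1:ℝ) ^ (n+1) * Real.log 1 ^ (j+1) / ((n:ℝ)+1))) := by
          apply Filter.Tendsto.div_const
          exact ((continuous_pow (n+1)).tendsto 1).mul
            (((Real.continuousAt_log one_ne_zero).tendsto).pow (j+1))
        simpa using hc.mono_left nhdsWithin_le_nhds
      have hint : IntervalIntegrable (fun u : ℝ =>
          u ^ n * Real.log u ^ (j+1) + (((j:ℝ)+1)/((n:ℝ)+1)) * (u ^ n * Real.log u ^ j))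
          volume 0 1 :=
        (intervalIntegrable_pow_mul_log_pow n (j+1)).add
          ((intervalIntegrable_pow_mul_log_pow n j).const_mul _)
      have := intervalIntegral.integral_eq_sub_of_hasDerivAt_of_tendsto
        (by norm_num : (0:ℝ) < 1) hder hint htend0 htend1
      simpa using this
    rw [intervalIntegral.integral_add (intervalIntegrable_pow_mul_log_pow n (j+1))
      ((intervalIntegrable_pow_mul_log_pow n j).const_mul _),
      intervalIntegral.integral_const_mul, ih] at key
    have hn1 : ((n:ℝ)+1) ≠ 0 := by positivity
    have : ∫ u in (0:ℝ)..1, u ^ n * Real.log u ^ (j+1)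
        = -((((j:ℝ)+1)/((n:ℝ)+1)) * ((-1)^j * j.factorial / ((n:ℝ)+1)^(j+1))) := by
      linarith
    rw [this, Nat.factorial_succ]
    push_cast
    field_simp
    ring

lemma summable_aux (j : ℕ) (hj : 1 ≤ j) :
    Summable (fun n : ℕ => (j.factorial : ℝ) / ((n:ℝ)+1)^(j+1)) := by
  have h2 : Summable (fun n : ℕ => 1 / ((n:ℝ))^(j+1)) :=
    Real.summable_one_div_nat_pow.mpr (by omega)
  have h3 : Summable (fun n : ℕ => 1 / (((n:ℕ)+1:ℝ))^(j+1)) := by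
    have := (summable_nat_add_iff (f := fun n : ℕ => 1 / ((n:ℝ))^(j+1)) 1).mpr h2
    simpa using this
  simpa [div_eq_mul_inv, mul_comm] using h3.mul_left (j.factorial : ℝ)

lemma integral_log_pow_div (j : ℕ) (hj : 1 ≤ j) :
    ∫ u in (0:ℝ)..1, Real.log u ^ j / (1+u)
      = (-1)^j * j.factorial * ∑' n : ℕ, (-1:ℝ)^n/((n:ℝ)+1)^(j+1) := by
  set F : ℕ → ℝ → ℝ := fun n u => Real.log u ^ j * (-u) ^ n with hF
  have hFint : ∀ n : ℕ, Integrable (F n) (volume.restrict (Set.Ioo (0:ℝ) 1)) := by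
    intro n
    have h := intervalIntegrable_pow_mul_log_pow n j
    rw [intervalIntegrable_iff_integrableOn_Ioo_of_le (by norm_num : (0:ℝ) ≤ 1)] at h
    have h2 : IntegrableOn (fun u : ℝ => (-1:ℝ)^n * (u ^ n * Real.log u ^ j))
        (Set.Ioo 0 1) volume := h.const_mul _
    apply h2.congr_fun ?_ measurableSet_Ioo
    intro u _
    simp only [hF]
    rw [neg_pow]
    ring
  have hIoo : ∀ n : ℕ, ∫ u in Set.Ioo (0:ℝ) 1, u ^ n * Real.log u ^ j
      = (-1)^j * j.factorial / ((n:ℝ)+1)^(j+1) := by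
    intro n
    rw [← MeasureTheory.integral_Ioc_eq_integral_Ioo,
      ← intervalIntegral.integral_of_le (by norm_num : (0:ℝ) ≤ 1)]
    exact integral_pow_mul_log_pow n j
  have hnorm : ∀ n : ℕ, ∫ u in Set.Ioo (0:ℝ) 1, ‖F n u‖
      = (j.factorial : ℝ) / ((n:ℝ)+1)^(j+1) := by
    intro n
    have : ∀ u ∈ Set.Ioo (0:ℝ) 1, ‖F n u‖ = (-1:ℝ)^j * (u ^ n * Real.log u ^ j) := by
      intro u hu
      have hlu : Real.log u ≤ 0 := Real.log_nonpos hu.1.le hu.2.le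
      simp only [hF, Real.norm_eq_abs, abs_mul, abs_pow, abs_neg]
      rw [abs_of_nonpos hlu, abs_of_pos hu.1]
      rw [show (-Real.log u) ^ j = (-1:ℝ)^j * Real.log u ^ j from neg_pow _ _]
      ring
    rw [MeasureTheory.setIntegral_congr_fun measurableSet_Ioo this,
      MeasureTheory.integral_const_mul, hIoo n]
    rw [show ((-1:ℝ)^j) * ((-1)^j * (j.factorial:ℝ) / ((n:ℝ)+1)^(j+1))
      = ((-1:ℝ)^j * (-1)^j) * ((j.factorial:ℝ) / ((n:ℝ)+1)^(j+1)) by ring,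
      ← pow_add, Even.neg_one_pow ⟨j, by ring⟩, one_mul]
  have hsum : Summable fun n : ℕ => ∫ u in Set.Ioo (0:ℝ) 1, ‖F n u‖ := by
    rw [show (fun n : ℕ => ∫ u in Set.Ioo (0:ℝ) 1, ‖F n u‖)
      = fun n : ℕ => (j.factorial : ℝ) / ((n:ℝ)+1)^(j+1) from funext hnorm]
    exact summable_aux j hj
  have hswap := MeasureTheory.integral_tsum_of_summable_integral_norm hFint hsum
  -- identify the integral of the tsum
  have htsum : ∀ u ∈ Set.Ioo (0:ℝ) 1, (∑' n : ℕ, F n u) = Real.log u ^ j / (1+u) := by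
    intro u hu
    simp only [hF]
    rw [tsum_mul_left, tsum_geometric_of_abs_lt_one (by rw [abs_neg, abs_of_pos hu.1]; exact hu.2)]
    rw [sub_neg_eq_add]
    exact (div_eq_mul_inv _ _).symm
  have hleft : ∑' n : ℕ, ∫ u in Set.Ioo (0:ℝ) 1, F n u
      = (-1)^j * j.factorial * ∑' n : ℕ, (-1:ℝ)^n/((n:ℝ)+1)^(j+1) := by
    have : ∀ n : ℕ, ∫ u in Set.Ioo (0:ℝ) 1, F n u
        = ((-1:ℝ)^j * j.factorial) * ((-1:ℝ)^n/((n:ℝ)+1)^(j+1)) := by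
      intro n
      have heq : ∀ u ∈ Set.Ioo (0:ℝ) 1, F n u = (-1:ℝ)^n * (u ^ n * Real.log u ^ j) := by
        intro u _
        simp only [hF]; rw [neg_pow]; ring
      rw [MeasureTheory.setIntegral_congr_fun measurableSet_Ioo heq,
        MeasureTheory.integral_const_mul, hIoo n]
      ring
    rw [show (fun n : ℕ => ∫ u in Set.Ioo (0:ℝ) 1, F n u)
      = fun n : ℕ => ((-1:ℝ)^j * j.factorial) * ((-1:ℝ)^n/((n:ℝ)+1)^(j+1)) from funext this]
    exact tsum_mul_left
  rw [intervalIntegral.integral_of_le (by norm_num : (0:ℝ) ≤ 1),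
    MeasureTheory.integral_Ioc_eq_integral_Ioo]
  rw [← MeasureTheory.setIntegral_congr_fun measurableSet_Ioo htsum]
  rw [← hswap, hleft]

section Subs

variable {x : ℝ} (hx0 : 0 < x) (hx1 : x < 1)

/-- integrability of `log(x*u)^m/(1+u)` on `[0,1]` -/
lemma hintC (m : ℕ) (hx0 : 0 < x) :
    IntervalIntegrable (fun u : ℝ => Real.log (x*u) ^ m / (1+u)) volume 0 1 := by
  apply intervalIntegrable_of_log_bound _ m ((1 + |Real.log x|) ^ m)
  · apply ContinuousOn.div
    · apply ContinuousOn.pow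
      apply Real.continuousOn_log.comp (continuous_const.mul continuous_id).continuousOn
      intro u hu
      simp only [Set.mem_compl_iff, Set.mem_singleton_iff, id_eq]
      exact (by nlinarith [hu.1, hu.2] : (0:ℝ) < x * u).ne'
    · exact continuousOn_const.add continuousOn_id
    · intro u hu; nlinarith [hu.1]
  · intro u hu
    have hu0 := hu.1
    have h1u : (1:ℝ) ≤ 1 + u := by linarith
    rw [abs_div, abs_pow]
    have hd : |1 + u| = 1 + u := abs_of_pos (by linarith)
    rw [Real.log_mul hx0.ne' hu0.ne']
    calc |Real.log x + Real.log u| ^ m / |1+u| ≤ |Real.log x + Real.log u| ^ m := by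
          rw [hd]; exact div_le_self (by positivity) h1u
      _ ≤ ((1 + |Real.log x|) * (1 + |Real.log u|)) ^ m := by
          apply pow_le_pow_left₀ (abs_nonneg _)
          calc |Real.log x + Real.log u| ≤ |Real.log x| + |Real.log u| := abs_add_le _ _
            _ ≤ (1 + |Real.log x|) * (1 + |Real.log u|) := by
                nlinarith [abs_nonneg (Real.log x), abs_nonneg (Real.log u)]
      _ = (1 + |Real.log x|) ^ m * (1 + |Real.log u|) ^ m := mul_pow _ _ _

/-- integrability of `log(x/u)^m/(1+u)` on `[0,1]` -/
lemma hintE (m : ℕ) (hx0 : 0 < x) :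
    IntervalIntegrable (fun u : ℝ => Real.log (x/u) ^ m / (1+u)) volume 0 1 := by
  apply intervalIntegrable_of_log_bound _ m ((1 + |Real.log x|) ^ m)
  · apply ContinuousOn.div
    · apply ContinuousOn.pow
      apply Real.continuousOn_log.comp
        (continuousOn_const.div continuousOn_id (fun u hu => ne_of_gt hu.1))
      intro u hu
      simp only [Set.mem_compl_iff, Set.mem_singleton_iff, id_eq]
      exact (div_pos hx0 hu.1).ne'
    · exact continuousOn_const.add continuousOn_id
    · intro u hu; nlinarith [hu.1]
  · intro u hu
    have hu0 := hu.1
    have h1u : (1:ℝ) ≤ 1 + u := by linarith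
    rw [abs_div, abs_pow]
    have hd : |1 + u| = 1 + u := abs_of_pos (by linarith)
    rw [Real.log_div hx0.ne' hu0.ne']
    calc |Real.log x - Real.log u| ^ m / |1+u| ≤ |Real.log x - Real.log u| ^ m := by
          rw [hd]; exact div_le_self (by positivity) h1u
      _ ≤ ((1 + |Real.log x|) * (1 + |Real.log u|)) ^ m := by
          apply pow_le_pow_left₀ (abs_nonneg _)
          calc |Real.log x - Real.log u| ≤ |Real.log x| + |Real.log u| := abs_sub _ _
            _ ≤ (1 + |Real.log x|) * (1 + |Real.log u|) := by
                nlinarith [abs_nonneg (Real.log x), abs_nonneg (Real.log u)]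
      _ = (1 + |Real.log x|) ^ m * (1 + |Real.log u|) ^ m := mul_pow _ _ _

/-- integrability of `log u ^ j/(1+u)` on `[0,1]` -/
lemma hintJ (j : ℕ) :
    IntervalIntegrable (fun u : ℝ => Real.log u ^ j / (1+u)) volume 0 1 := by
  apply intervalIntegrable_of_log_bound _ j 1
  · apply ContinuousOn.div
    · exact (Real.continuousOn_log.mono (fun u hu => ne_of_gt hu.1)).pow j
    · exact continuousOn_const.add continuousOn_id
    · intro u hu; nlinarith [hu.1]
  · intro u hu
    have h1u : (1:ℝ) ≤ 1 + u := by linarith [hu.1]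
    rw [abs_div, abs_pow, one_mul]
    have hd : |1 + u| = 1 + u := abs_of_pos (by linarith)
    calc |Real.log u| ^ j / |1+u| ≤ |Real.log u| ^ j := by
          rw [hd]; exact div_le_self (by positivity) h1u
      _ ≤ (1 + |Real.log u|) ^ j :=
          pow_le_pow_left₀ (abs_nonneg _) (by linarith [abs_nonneg (Real.log u)]) j

end Subs

/-- S1: scaling substitution `y = x*u`. -/
lemma sub1 (m : ℕ) {x : ℝ} (hx0 : 0 < x) :
    ∫ y in (0:ℝ)..1, Real.log y ^ m / (x + y)
      = ∫ u in (0:ℝ)..(1/x), Real.log (x*u) ^ m / (1+u) := by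
  have h := intervalIntegral.integral_comp_mul_left
    (fun y : ℝ => Real.log y ^ m / (x + y)) (a := 0) (b := 1/x) hx0.ne'
  rw [mul_zero, mul_one_div, div_self hx0.ne'] at h
  -- h : ∫ u in 0..1/x, log (x*u)^m/(x + x*u) = x⁻¹ • ∫ y in 0..1, log y^m/(x+y)
  have key : ∀ u : ℝ, Real.log (x*u) ^ m / (1+u) = x * (Real.log (x*u) ^ m / (x + x*u)) := by
    intro u
    rcases eq_or_ne (1 + u) 0 with h0 | h0
    · simp [show x + x*u = x * (1+u) by ring, h0]
    · rw [show x + x*u = x * (1+u) by ring]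
      field_simp
  rw [show (fun u : ℝ => Real.log (x*u) ^ m / (1+u))
    = fun u : ℝ => x * (Real.log (x*u) ^ m / (x + x*u)) from funext key]
  rw [intervalIntegral.integral_const_mul, h, smul_eq_mul]
  field_simp

/-- S2: substitution `y = v/x` for the `A` integral. -/
lemma subA (m : ℕ) {x : ℝ} (hx0 : 0 < x) :
    ∫ y in (0:ℝ)..1, (-x) * Real.log y ^ m / (1 + x*y)
      = -∫ v in (0:ℝ)..x, Real.log (v/x) ^ m / (1+v) := by
  have h := intervalIntegral.integral_comp_div
    (fun y : ℝ => (-x) * Real.log y ^ m / (1 + x*y)) (a := 0) (b := x) hx0.ne'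
  rw [zero_div, div_self hx0.ne'] at h
  -- h : ∫ v in 0..x, f (v/x) = x • ∫ y in 0..1, f y
  have key : ∀ v : ℝ, (-x) * Real.log (v/x) ^ m / (1 + x*(v/x))
      = -x * (Real.log (v/x) ^ m / (1+v)) := by
    intro v
    rw [show x * (v/x) = v by field_simp]
    ring
  rw [show (fun v : ℝ => (fun y : ℝ => (-x) * Real.log y ^ m / (1 + x*y)) (v/x))
    = fun v : ℝ => -x * (Real.log (v/x) ^ m / (1+v)) from funext key] at h
  rw [intervalIntegral.integral_const_mul, smul_eq_mul] at h
  have hx : x ≠ 0 := hx0.ne'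
  refine mul_left_cancel₀ hx ?_
  linear_combination -h

/-- S4: substitution `u = 1/v` on `[1, 1/x]`. -/
lemma subR (m : ℕ) {x : ℝ} (hx0 : 0 < x) (hx1 : x < 1) :
    ∫ u in (1:ℝ)..(1/x), Real.log (x*u) ^ m / (1+u)
      = ∫ v in x..1, Real.log (x/v) ^ m / (v*(1+v)) := by
  have hx : x ≠ 0 := hx0.ne'
  set g : ℝ → ℝ := fun u => Real.log (x*u) ^ m / (1+u) with hg
  have hIcc : Set.uIcc (1:ℝ) x = Set.Icc x 1 := Set.uIcc_of_ge hx1.le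
  have hmem : ∀ v ∈ Set.uIcc (1:ℝ) x, 0 < v := by
    intro v hv
    rw [hIcc] at hv
    linarith [hv.1]
  have hder : ∀ v ∈ Set.uIcc (1:ℝ) x, HasDerivAt (fun v : ℝ => v⁻¹) (-(v^2)⁻¹) v := by
    intro v hv
    simpa using hasDerivAt_inv (hmem v hv).ne'
  have hcont' : ContinuousOn (fun v : ℝ => -(v^2)⁻¹) (Set.uIcc (1:ℝ) x) := by
    apply ContinuousOn.neg
    apply ContinuousOn.inv₀ (continuousOn_pow 2)
    intro v hv
    exact pow_ne_zero 2 (hmem v hv).ne'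
  have hcontg : ContinuousOn g ((fun v : ℝ => v⁻¹) '' Set.uIcc 1 x) := by
    have himage : ∀ w ∈ (fun v : ℝ => v⁻¹) '' Set.uIcc 1 x, 0 < w := by
      rintro w ⟨v, hv, rfl⟩
      exact inv_pos.mpr (hmem v hv)
    apply ContinuousOn.div
    · apply ContinuousOn.pow
      apply Real.continuousOn_log.comp (continuous_const.mul continuous_id).continuousOn
      intro w hw
      simp only [Set.mem_compl_iff, Set.mem_singleton_iff, id_eq]
      exact (mul_pos hx0 (himage w hw)).ne'
    · exact continuousOn_const.add continuousOn_id
    · intro w hw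
      have := himage w hw
      intro h0
      rw [← h0] at this
      nlinarith [himage w hw]
  have h := intervalIntegral.integral_comp_smul_deriv' (a := 1) (b := x)
    (f := fun v : ℝ => v⁻¹) (f' := fun v : ℝ => -(v^2)⁻¹) (g := g) hder hcont' hcontg
  simp only [inv_one] at h
  rw [show (1:ℝ)/x = x⁻¹ from one_div x, ← h]
  rw [intervalIntegral.integral_symm]
  have heq : Set.EqOn (fun v : ℝ => -(v^2)⁻¹ • (g ∘ fun v : ℝ => v⁻¹) v)
      (fun v : ℝ => -(Real.log (x/v) ^ m / (v*(1+v)))) (Set.uIcc x 1) := by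
    intro v hv
    rw [Set.uIcc_of_le hx1.le] at hv
    have hv0 : 0 < v := lt_of_lt_of_le hx0 hv.1
    simp only [hg, Function.comp, smul_eq_mul]
    rw [show x * v⁻¹ = x / v from (div_eq_mul_inv x v).symm]
    have h1v : 0 < 1 + v⁻¹ := by positivity
    field_simp
    ring
  rw [intervalIntegral.integral_congr heq, intervalIntegral.integral_neg, neg_neg]

/-- S5: `∫_x^1 log(x/v)^m / v dv = -(log x)^(m+1)/(m+1)`. -/
lemma subS5 (m : ℕ) {x : ℝ} (hx0 : 0 < x) (hx1 : x < 1) :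
    ∫ v in x..(1:ℝ), Real.log (x/v) ^ m / v = -(Real.log x)^(m+1)/(m+1) := by
  have hder : ∀ v ∈ Set.uIcc x (1:ℝ),
      HasDerivAt (fun v : ℝ => -(Real.log x - Real.log v)^(m+1)/((m:ℝ)+1))
        ((Real.log x - Real.log v) ^ m / v) v := by
    intro v hv
    rw [Set.uIcc_of_le hx1.le] at hv
    have hv0 : 0 < v := lt_of_lt_of_le hx0 hv.1
    have h1 : HasDerivAt (fun v : ℝ => Real.log x - Real.log v) (-(1/v)) v := by
      simpa using (Real.hasDerivAt_log hv0.ne').const_sub (Real.log x)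
    have h2 := (h1.pow (m+1)).neg.div_const ((m:ℝ)+1)
    refine h2.congr_deriv ?_
    have : ((m:ℝ)+1) ≠ 0 := by positivity
    rw [Nat.add_sub_cancel]
    push_cast
    field_simp
  have hcont : ContinuousOn (fun v : ℝ => (Real.log x - Real.log v) ^ m / v)
      (Set.uIcc x 1) := by
    rw [Set.uIcc_of_le hx1.le]
    apply ContinuousOn.div
    · exact ((continuousOn_const.sub (Real.continuousOn_log.mono
        (fun v hv => ne_of_gt (lt_of_lt_of_le hx0 hv.1)))).pow m)
    · exact continuousOn_id
    · exact fun v hv => ne_of_gt (lt_of_lt_of_le hx0 hv.1)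
  have h := intervalIntegral.integral_eq_sub_of_hasDerivAt hder hcont.intervalIntegrable
  have heq : Set.EqOn (fun v : ℝ => Real.log (x/v) ^ m / v)
      (fun v : ℝ => (Real.log x - Real.log v) ^ m / v) (Set.uIcc x 1) := by
    intro v hv
    rw [Set.uIcc_of_le hx1.le] at hv
    have hv0 : 0 < v := lt_of_lt_of_le hx0 hv.1
    simp only
    rw [Real.log_div hx0.ne' hv0.ne']
  rw [intervalIntegral.integral_congr heq, h]
  rw [Real.log_one, sub_zero, sub_self, zero_pow (by omega : m + 1 ≠ 0)]
  ring

lemma expand_aux (m : ℕ) (c s : ℝ) :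
    ∫ u in (0:ℝ)..1, (c + s * Real.log u)^m / (1+u)
      = ∑ j ∈ Finset.range (m+1), (m.choose j : ℝ) * s^j * c^(m-j) *
          ∫ u in (0:ℝ)..1, Real.log u ^ j / (1+u) := by
  have hpt : ∀ u : ℝ, (c + s * Real.log u)^m / (1+u)
      = ∑ j ∈ Finset.range (m+1),
          ((m.choose j : ℝ) * s^j * c^(m-j)) * (Real.log u ^ j / (1+u)) := by
    intro u
    rw [add_comm c (s * Real.log u), add_pow, Finset.sum_div]
    apply Finset.sum_congr rfl
    intro j hj
    rw [mul_pow]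
    ring
  rw [show (fun u : ℝ => (c + s * Real.log u)^m / (1+u))
    = fun u : ℝ => ∑ j ∈ Finset.range (m+1),
        ((m.choose j : ℝ) * s^j * c^(m-j)) * (Real.log u ^ j / (1+u)) from funext hpt]
  rw [intervalIntegral.integral_finset_sum
    (fun j _ => (hintJ j).const_mul ((m.choose j : ℝ) * s^j * c^(m-j)))]
  exact Finset.sum_congr rfl fun j _ => intervalIntegral.integral_const_mul _ _

lemma expandC (m : ℕ) {x : ℝ} (hx0 : 0 < x) :
    ∫ u in (0:ℝ)..1, Real.log (x*u) ^ m / (1+u)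
      = ∑ j ∈ Finset.range (m+1), (m.choose j : ℝ) * (Real.log x)^(m-j) *
          ∫ u in (0:ℝ)..1, Real.log u ^ j / (1+u) := by
  have hcongr : ∫ u in (0:ℝ)..1, Real.log (x*u) ^ m / (1+u)
      = ∫ u in (0:ℝ)..1, (Real.log x + 1 * Real.log u)^m / (1+u) := by
    apply intervalIntegral.integral_congr_ae
    apply MeasureTheory.ae_of_all
    intro u hu
    rw [Set.uIoc_of_le (by norm_num : (0:ℝ) ≤ 1)] at hu
    rw [Real.log_mul hx0.ne' (ne_of_gt hu.1), one_mul]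
  rw [hcongr, expand_aux m (Real.log x) 1]
  exact Finset.sum_congr rfl fun j _ => by rw [one_pow, mul_one]

lemma expandE (m : ℕ) {x : ℝ} (hx0 : 0 < x) :
    ∫ u in (0:ℝ)..1, Real.log (x/u) ^ m / (1+u)
      = ∑ j ∈ Finset.range (m+1), (m.choose j : ℝ) * (-1)^j * (Real.log x)^(m-j) *
          ∫ u in (0:ℝ)..1, Real.log u ^ j / (1+u) := by
  have hcongr : ∫ u in (0:ℝ)..1, Real.log (x/u) ^ m / (1+u)
      = ∫ u in (0:ℝ)..1, (Real.log x + (-1) * Real.log u)^m / (1+u) := by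
    apply intervalIntegral.integral_congr_ae
    apply MeasureTheory.ae_of_all
    intro u hu
    rw [Set.uIoc_of_le (by norm_num : (0:ℝ) ≤ 1)] at hu
    rw [Real.log_div hx0.ne' (ne_of_gt hu.1)]
    ring_nf
  rw [hcongr, expand_aux m (Real.log x) (-1)]

lemma sum_odd_terms (f : ℕ → ℝ) (hf : ∀ j, Even j → f j = 0) (n : ℕ) :
    ∑ j ∈ Finset.range n, f j = ∑ k ∈ Finset.range (n/2), f (2*k+1) := by
  induction n with
  | zero => simp
  | succ n ih =>
    rw [Finset.sum_range_succ, ih]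
    rcases Nat.even_or_odd n with he | ho
    · rw [hf n he, add_zero]
      rcases he with ⟨t, ht⟩
      have : (n+1)/2 = n/2 := by omega
      rw [this]
    · have h2 : (n+1)/2 = n/2 + 1 := by
        rcases ho with ⟨t, ht⟩
        omega
      have h3 : 2*(n/2)+1 = n := by
        rcases ho with ⟨t, ht⟩
        omega
      rw [h2, Finset.sum_range_succ, h3]


theorem stmt_4 (p : ℕ) (hp : 0 < p) (x : ℝ) (hx0 : 0 < x) (hx1 : x < 1) :
    liInt p (-x) + (-1 : ℝ) ^ p * liInt p (-(1 / x)) =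
      2 * (-1) * ∑ k ∈ Finset.range (p / 2 + 1),
        Real.log x ^ (p - 2 * k) / (Nat.factorial (p - 2 * k)) * etaC (2 * k) := by
  obtain ⟨m, rfl⟩ : ∃ m, p = m + 1 := ⟨p - 1, (Nat.succ_pred_eq_of_pos hp).symm⟩
  clear hp
  have hx : x ≠ 0 := hx0.ne'
  have hxinv : (1:ℝ) ≤ 1/x := by
    rw [le_div_iff₀ hx0, one_mul]; exact hx1.le
  set L := Real.log x with hL
  set M := (m.factorial : ℝ) with hM
  have hM0 : M ≠ 0 := by positivity
  set W := ∫ v in (0:ℝ)..x, Real.log (v/x)^m/(1+v) with hW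
  set Cc := ∫ u in (0:ℝ)..1, Real.log (x*u)^m/(1+u) with hCc
  set E := ∫ u in (0:ℝ)..1, Real.log (x/u)^m/(1+u) with hE
  set Q := ∫ y in (0:ℝ)..1, Real.log y^m/(x+y) with hQ
  set R := ∫ u in (1:ℝ)..(1/x), Real.log (x*u)^m/(1+u) with hR
  -- Step 1 : A-integral
  have h1 : liInt (m+1) (-x) = ((-1:ℝ)^m/M) * (-W) := by
    rw [liInt, Nat.add_sub_cancel]
    congr 1
    have : (fun y : ℝ => (-x) * Real.log y ^ m / (1 - (-x) * y))
        = fun y : ℝ => (-x) * Real.log y ^ m / (1 + x * y) := by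
      funext y; rw [show (1:ℝ) - (-x) * y = 1 + x * y by ring]
    rw [show ∫ y in (0:ℝ)..1, (-x) * Real.log y ^ m / (1 - (-x) * y)
      = ∫ y in (0:ℝ)..1, (-x) * Real.log y ^ m / (1 + x*y) by rw [this]]
    rw [subA m hx0]
  -- Step 2 : B-integral
  have h2 : liInt (m+1) (-(1/x)) = ((-1:ℝ)^m/M) * (-Q) := by
    rw [liInt, Nat.add_sub_cancel]
    congr 1
    rw [hQ, ← intervalIntegral.integral_neg]
    apply intervalIntegral.integral_congr
    intro y hy
    rw [Set.uIcc_of_le (by norm_num : (0:ℝ) ≤ 1)] at hy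
    have hxy : 0 < x + y := by linarith [hy.1]
    simp only
    rw [show (1:ℝ) - -(1/x) * y = (x+y)/x by field_simp; ring]
    rw [div_div_eq_mul_div,
      show -(1/x) * Real.log y ^ m * x = -(Real.log y ^ m) by field_simp, neg_div]
  -- integrability facts
  have hC2 : IntervalIntegrable (fun u : ℝ => Real.log (x*u)^m/(1+u)) volume 1 (1/x) := by
    apply ContinuousOn.intervalIntegrable
    rw [Set.uIcc_of_le hxinv]
    apply ContinuousOn.div
    · apply ContinuousOn.pow
      apply Real.continuousOn_log.comp (continuous_const.mul continuous_id).continuousOn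
      intro u hu
      simp only [Set.mem_compl_iff, Set.mem_singleton_iff, id_eq]
      have : (0:ℝ) < u := lt_of_lt_of_le one_pos hu.1
      exact (mul_pos hx0 this).ne'
    · exact continuousOn_const.add continuousOn_id
    · intro u hu
      have : (0:ℝ) < u := lt_of_lt_of_le one_pos hu.1
      intro h0; nlinarith
  have hE0x : IntervalIntegrable (fun u : ℝ => Real.log (x/u)^m/(1+u)) volume 0 x :=
    (hintE m hx0).mono_set (Set.uIcc_subset_uIcc
      (by rw [Set.uIcc_of_le (by norm_num : (0:ℝ) ≤ 1)]; exact ⟨le_refl 0, by norm_num⟩)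
      (by rw [Set.uIcc_of_le (by norm_num : (0:ℝ) ≤ 1)]; exact ⟨hx0.le, hx1.le⟩))
  have hEx1 : IntervalIntegrable (fun u : ℝ => Real.log (x/u)^m/(1+u)) volume x 1 :=
    (hintE m hx0).mono_set (Set.uIcc_subset_uIcc
      (by rw [Set.uIcc_of_le (by norm_num : (0:ℝ) ≤ 1)]; exact ⟨hx0.le, hx1.le⟩)
      (by rw [Set.uIcc_of_le (by norm_num : (0:ℝ) ≤ 1)]; exact ⟨by norm_num, le_refl 1⟩))
  -- Step 3 : split Q
  have h3 : Q = Cc + R := by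
    rw [hQ, sub1 m hx0, hCc, hR]
    exact (intervalIntegral.integral_add_adjacent_intervals (hintC m hx0) hC2).symm
  -- Step 4 : compute R
  have h4 : R = -(L^(m+1))/(m+1) - E + (-1:ℝ)^m * W := by
    have hWW : (∫ v in (0:ℝ)..x, Real.log (x/v)^m/(1+v)) = (-1:ℝ)^m * W := by
      rw [hW, ← intervalIntegral.integral_const_mul]
      apply intervalIntegral.integral_congr
      intro v _
      simp only
      rw [show x/v = (v/x)⁻¹ from (inv_div v x).symm, Real.log_inv, neg_pow]
      ring
    have hsplit : (∫ v in x..(1:ℝ), Real.log (x/v)^m/(1+v)) = E - (-1:ℝ)^m * W := by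
      rw [hE, ← intervalIntegral.integral_add_adjacent_intervals hE0x hEx1, hWW]
      ring
    have hcont1 : ContinuousOn (fun v : ℝ => Real.log (x/v)^m/v) (Set.uIcc x 1) := by
      rw [Set.uIcc_of_le hx1.le]
      have hv0 : ∀ v ∈ Set.Icc x 1, (0:ℝ) < v := fun v hv => lt_of_lt_of_le hx0 hv.1
      apply ContinuousOn.div
      · apply ContinuousOn.pow
        apply Real.continuousOn_log.comp
          (continuousOn_const.div continuousOn_id (fun v hv => (hv0 v hv).ne'))
        intro v hv
        simp only [Set.mem_compl_iff, Set.mem_singleton_iff, id_eq]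
        exact (div_pos hx0 (hv0 v hv)).ne'
      · exact continuousOn_id
      · exact fun v hv => (hv0 v hv).ne'
    have hcont2 : ContinuousOn (fun v : ℝ => Real.log (x/v)^m/(1+v)) (Set.uIcc x 1) := by
      rw [Set.uIcc_of_le hx1.le]
      have hv0 : ∀ v ∈ Set.Icc x 1, (0:ℝ) < v := fun v hv => lt_of_lt_of_le hx0 hv.1
      apply ContinuousOn.div
      · apply ContinuousOn.pow
        apply Real.continuousOn_log.comp
          (continuousOn_const.div continuousOn_id (fun v hv => (hv0 v hv).ne'))
        intro v hv
        simp only [Set.mem_compl_iff, Set.mem_singleton_iff, id_eq]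
        exact (div_pos hx0 (hv0 v hv)).ne'
      · exact continuousOn_const.add continuousOn_id
      · intro v hv
        have := hv0 v hv
        intro h0; nlinarith
    have hpf : (∫ v in x..(1:ℝ), Real.log (x/v)^m/(v*(1+v)))
        = (∫ v in x..(1:ℝ), Real.log (x/v)^m/v) - ∫ v in x..(1:ℝ), Real.log (x/v)^m/(1+v) := by
      rw [← intervalIntegral.integral_sub hcont1.intervalIntegrable hcont2.intervalIntegrable]
      apply intervalIntegral.integral_congr
      intro v hv
      rw [Set.uIcc_of_le hx1.le] at hv
      have hv0 : (0:ℝ) < v := lt_of_lt_of_le hx0 hv.1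
      have h1v : (0:ℝ) < 1 + v := by linarith
      simp only
      field_simp
      ring
    rw [hR, subR m hx0 hx1, hpf, subS5 m hx0 hx1, hsplit, hL]
    ring
  -- Step 5 : binomial expansion of Cc - E
  have h5 : Cc - E = ∑ j ∈ Finset.range (m+1),
      (m.choose j : ℝ) * L^(m-j) * (1 - (-1:ℝ)^j) *
        ∫ u in (0:ℝ)..1, Real.log u ^ j / (1+u) := by
    rw [hCc, hE, expandC m hx0, expandE m hx0, ← Finset.sum_sub_distrib]
    apply Finset.sum_congr rfl
    intro j _
    ring
  -- Step 6 : LHS closed form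
  have hm1 : ((m:ℝ)+1) ≠ 0 := by positivity
  have hsign : ((-1:ℝ)^m)*((-1:ℝ)^m) = 1 := by
    rw [← pow_add]; exact Even.neg_one_pow ⟨m, by ring⟩
  have hLHS : liInt (m+1) (-x) + (-1:ℝ)^(m+1) * liInt (m+1) (-(1/x))
      = (Cc - E)/M - L^(m+1)/((m:ℝ)+1)/M := by
    rw [h1, h2, h3, h4, pow_succ]
    linear_combination ((Cc-E)/M - L^(m+1)/((m:ℝ)+1)/M + (-1:ℝ)^m*W/M) * hsign
  rw [hLHS]
  -- Step 7 : RHS manipulation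
  rw [Finset.mul_sum, Finset.sum_range_succ']
  have hf0 : 2 * (-1:ℝ) * (L ^ (m+1-2*0) / (Nat.factorial (m+1-2*0)) * etaC (2*0))
      = -(L^(m+1)/((m:ℝ)+1)/M) := by
    rw [show 2*0 = 0 by ring, Nat.sub_zero, etaC, if_pos rfl, Nat.factorial_succ]
    push_cast [hM]
    field_simp
  rw [hf0]
  rw [show (Cc - E)/M - L^(m+1)/((m:ℝ)+1)/M
    = (Cc - E)/M + -(L^(m+1)/((m:ℝ)+1)/M) by ring]
  congr 1
  -- Step 8 : odd terms
  set Jf : ℕ → ℝ := fun j => ∫ u in (0:ℝ)..1, Real.log u ^ j / (1+u) with hJf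
  set t : ℕ → ℝ := fun j => (m.choose j : ℝ) * L^(m-j) * (1 - (-1:ℝ)^j) * Jf j with ht
  have h5' : Cc - E = ∑ j ∈ Finset.range (m+1), t j := h5
  have hteven : ∀ j, Even j → t j = 0 := by
    intro j hj
    simp only [ht, hj.neg_one_pow, sub_self, mul_zero, zero_mul]
  rw [h5', sum_odd_terms t hteven (m+1), Finset.sum_div]
  apply Finset.sum_congr rfl
  intro k hk
  rw [Finset.mem_range] at hk
  have hle : 2*k+1 ≤ m := by omega
  have hJ : Jf (2*k+1) = (-1:ℝ) * ((2*k+1).factorial : ℝ) *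
      ∑' n : ℕ, (-1:ℝ)^n/((n:ℝ)+1)^(2*(k+1)) := by
    simp only [hJf]
    rw [integral_log_pow_div (2*k+1) (by omega), Odd.neg_one_pow ⟨k, by ring⟩,
      show 2*k+1+1 = 2*(k+1) by ring]
  have hodd1 : ((-1:ℝ)^(2*k+1)) = -1 := Odd.neg_one_pow ⟨k, by ring⟩
  have hetaval : etaC (2*(k+1)) = ∑' n : ℕ, (-1:ℝ)^n/((n:ℝ)+1)^(2*(k+1)) := by
    rw [etaC, if_neg (by omega)]
  have hexp : m + 1 - 2*(k+1) = m - (2*k+1) := by omega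
  have hfact : (m.choose (2*k+1) : ℝ) * ((2*k+1).factorial:ℝ) * ((m-(2*k+1)).factorial:ℝ)
      = M := by
    rw [hM]
    exact_mod_cast Nat.choose_mul_factorial_mul_factorial hle
  have hfac0 : ((m-(2*k+1)).factorial:ℝ) ≠ 0 := by positivity
  rw [ht]
  simp only
  rw [hodd1, hJ, hetaval, hexp]
  set η := ∑' n : ℕ, (-1:ℝ)^n/((n:ℝ)+1)^(2*(k+1)) with hη
  field_simp
  linear_combination (-2 * L^(m-(2*k+1)) * η) * hfact
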